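/- Let S be a finite multiset of real numbers in (0,1] and let m be a natural number with sum(S) ≥ 2m. Then S can be partitioned so as to contain m pairwise disjoint sub-multisets, each with total sum at least 1 (indeed each with total sum in [1,2)). -/

import Mathlib

lemma extract_block (S : Multiset ℝ) (hS : ∀ x ∈ S, x ≤ 1)
    (h1 : (1 : ℝ) ≤ S.sum) : ∃ B ≤ S, (1 : ℝ) ≤ B.sum ∧ B.sum < 2 := by
  induction S using Multiset.induction with
  | empty => simp at h1; linarith
  | cons a T ih =>
    by_cases hT : (1 : ℝ) ≤ T.sum
    · obtain ⟨B, hB, h⟩ := ih (fun x hx => hS x (Multiset.mem_cons_of_mem hx)) hT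
      exact ⟨B, le_trans hB (Multiset.le_cons_self _ _), h⟩
    · refine ⟨a ::ₘ T, le_refl _, h1, ?_⟩
      have ha : a ≤ 1 := hS a (Multiset.mem_cons_self _ _)
      rw [Multiset.sum_cons]
      linarith [not_le.mp hT]

theorem stmt_12 (S : Multiset ℝ) (hS : ∀ x ∈ S, 0 < x ∧ x ≤ 1)
    (m : ℕ) (hsum : (2 * m : ℝ) ≤ S.sum) :
    ∃ P : Multiset (Multiset ℝ), P.card = m ∧ P.sum ≤ S ∧
      ∀ B ∈ P, (1 : ℝ) ≤ B.sum ∧ B.sum < 2 := by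
  induction m generalizing S with
  | zero => exact ⟨0, rfl, by simp, by simp⟩
  | succ m ih =>
    have h1 : (1 : ℝ) ≤ S.sum := by
      have : (2 : ℝ) * (m + 1) ≥ 2 := by nlinarith [Nat.cast_nonneg (α := ℝ) m]
      push_cast at hsum; linarith
    obtain ⟨B, hB, hB1, hB2⟩ := extract_block S (fun x hx => (hS x hx).2) h1
    have hsplit : B + (S - B) = S := by
      rw [add_comm]; exact tsub_add_cancel_of_le hB
    have hsumsplit : B.sum + (S - B).sum = S.sum := by
      rw [← Multiset.sum_add, hsplit]
    obtain ⟨P, hPc, hPle, hPall⟩ := ih (S - B)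
      (fun x hx => hS x (Multiset.mem_of_le (tsub_le_self) hx))
      (by push_cast at hsum ⊢; linarith)
    refine ⟨B ::ₘ P, by simp [hPc], ?_, ?_⟩
    · rw [Multiset.sum_cons, ← hsplit]
      exact add_le_add_right hPle B
    · intro C hC
      rcases Multiset.mem_cons.mp hC with h | h
      · subst h; exact ⟨hB1, hB2⟩
      · exact hPall C h
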